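/- Let β > 1, n ≥ 1, and p ≥ 0 an integer. For a β-admissible word (ε_1,…,ε_n), the cylinder I_{n+p}(ε_1,…,ε_n,0^p) is full if and only if |I_n(ε_1,…,ε_n)| ≥ β^{-(n+p)}. -/

import Mathlib

open Filter MeasureTheory Set

/-- The β-transformation `T_β(x) = βx - ⌊βx⌋`. -/
noncomputable def betaT (β x : ℝ) : ℝ := Int.fract (β * x)

/-- The `(n+1)`-st digit of the β-expansion of `x` (0-indexed):
`betaDigit β x n = ⌊β ⬝ T_β^n(x)⌋`. -/
noncomputable def betaDigit (β x : ℝ) (n : ℕ) : ℕ := (⌊β * (betaT β)^[n] x⌋).toNat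

/-- The set `Σ_β^n` of β-admissible words of length `n`. -/
def admissibleWords (β : ℝ) (n : ℕ) : Set (Fin n → ℕ) :=
  {w | ∃ x ∈ Set.Ico (0:ℝ) 1, ∀ i : Fin n, betaDigit β x i = w i}

/-- The set `Σ_β` of β-admissible digit sequences. -/
def admissibleSeqs (β : ℝ) : Set (ℕ → ℕ) :=
  {e | ∃ x ∈ Set.Ico (0:ℝ) 1, ∀ i, betaDigit β x i = e i}

/-- The cylinder `I_n(w)` of a word `w`. -/
def cylinder (β : ℝ) {n : ℕ} (w : Fin n → ℕ) : Set ℝ :=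
  {x | x ∈ Set.Ico (0:ℝ) 1 ∧ ∀ i : Fin n, betaDigit β x i = w i}

/-- The partial digit sum `S_n(x,β)`. -/
noncomputable def Sdig (β x : ℝ) (n : ℕ) : ℝ := ∑ i ∈ Finset.range n, (betaDigit β x i : ℝ)

namespace Stmt8Aux

variable {β : ℝ}

lemma iter_mem {x : ℝ} (hx : x ∈ Set.Ico (0:ℝ) 1) :
    ∀ i, (betaT β)^[i] x ∈ Set.Ico (0:ℝ) 1
  | 0 => hx
  | (i+1) => by
      rw [Function.iterate_succ_apply']
      exact ⟨Int.fract_nonneg _, Int.fract_lt_one _⟩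

lemma floor_nonneg (hβ : 1 < β) {x : ℝ} (hx : x ∈ Set.Ico (0:ℝ) 1) (i : ℕ) :
    0 ≤ ⌊β * (betaT β)^[i] x⌋ :=
  Int.floor_nonneg.2 (mul_nonneg (by linarith) (iter_mem hx i).1)

lemma digit_cast (hβ : 1 < β) {x : ℝ} (hx : x ∈ Set.Ico (0:ℝ) 1) (i : ℕ) :
    ((betaDigit β x i : ℝ)) = ((⌊β * (betaT β)^[i] x⌋ : ℤ) : ℝ) := by
  unfold betaDigit
  exact_mod_cast congrArg (Int.cast : ℤ → ℝ) (Int.toNat_of_nonneg (floor_nonneg hβ hx i))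

lemma step (hβ : 1 < β) {x : ℝ} (hx : x ∈ Set.Ico (0:ℝ) 1) (i : ℕ) :
    (betaT β)^[i+1] x = β * (betaT β)^[i] x - (betaDigit β x i : ℝ) := by
  rw [Function.iterate_succ_apply', digit_cast hβ hx i]
  show Int.fract _ = _
  rw [Int.fract]

lemma expansion (hβ : 1 < β) {x : ℝ} (hx : x ∈ Set.Ico (0:ℝ) 1) :
    ∀ k, (betaT β)^[k] x
      = β^k * (x - ∑ i ∈ Finset.range k, (betaDigit β x i : ℝ) * (β^(i+1))⁻¹)
  | 0 => by simp
  | (k+1) => by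
      have hb : (0:ℝ) < β := lt_trans one_pos hβ
      have hbk : (β:ℝ)^(k+1) ≠ 0 := by positivity
      rw [step hβ hx k, expansion hβ hx k, Finset.sum_range_succ]
      field_simp
      ring

lemma iter_nonneg {y : ℝ} (hy : 0 ≤ y) : ∀ k, 0 ≤ (betaT β)^[k] y
  | 0 => hy
  | (k+1) => by rw [Function.iterate_succ_apply']; exact Int.fract_nonneg _

lemma iter_le (hβ : 1 < β) {y : ℝ} (hy : 0 ≤ y) : ∀ k, (betaT β)^[k] y ≤ β^k * y
  | 0 => by simp
  | (k+1) => by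
      have hb : (0:ℝ) < β := lt_trans one_pos hβ
      rw [Function.iterate_succ_apply']
      have hk : (0:ℝ) ≤ (betaT β)^[k] y := iter_nonneg hy k
      have h1 : betaT β ((betaT β)^[k] y) ≤ β * (betaT β)^[k] y := by
        show Int.fract (β * (betaT β)^[k] y) ≤ β * (betaT β)^[k] y
        have h0 : (0:ℤ) ≤ ⌊β * (betaT β)^[k] y⌋ := Int.floor_nonneg.2 (by positivity)
        have h0' : (0:ℝ) ≤ ((⌊β * (betaT β)^[k] y⌋ : ℤ) : ℝ) := by exact_mod_cast h0
        rw [Int.fract]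
        linarith
      calc betaT β ((betaT β)^[k] y) ≤ β * (betaT β)^[k] y := h1
        _ ≤ β * (β^k * y) := by nlinarith [iter_le hβ hy k]
        _ = β^(k+1) * y := by ring

lemma digit_eq_of_floor_eq (hβ : 1 < β) {x z : ℝ} (hx : x ∈ Set.Ico (0:ℝ) 1)
    (hz : z ∈ Set.Ico (0:ℝ) 1) {i j : ℕ}
    (h : ⌊β * (betaT β)^[i] x⌋ = ⌊β * (betaT β)^[j] z⌋) :
    betaDigit β x i = betaDigit β z j := by
  unfold betaDigit; rw [h]

lemma floor_eq_of_digit_eq (hβ : 1 < β) {x z : ℝ} (hx : x ∈ Set.Ico (0:ℝ) 1)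
    (hz : z ∈ Set.Ico (0:ℝ) 1) {i j : ℕ}
    (h : betaDigit β x i = betaDigit β z j) :
    ⌊β * (betaT β)^[i] x⌋ = ⌊β * (betaT β)^[j] z⌋ := by
  have h1 := Int.toNat_of_nonneg (floor_nonneg hβ hx i)
  have h2 := Int.toNat_of_nonneg (floor_nonneg hβ hz j)
  rw [← h1, ← h2]
  exact_mod_cast congrArg (Nat.cast : ℕ → ℤ) h

lemma sandwich (hβ : 1 < β) {x y z : ℝ} (hx : x ∈ Set.Ico (0:ℝ) 1) (hy : y ∈ Set.Ico (0:ℝ) 1)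
    (hxz : x ≤ z) (hzy : z ≤ y) {m : ℕ}
    (h : ∀ j < m, betaDigit β x j = betaDigit β y j) :
    ∀ i ≤ m, ((betaT β)^[i] y = (betaT β)^[i] x + β^i * (y - x)) ∧
      ((betaT β)^[i] z = (betaT β)^[i] x + β^i * (z - x)) ∧
      (∀ j < i, betaDigit β z j = betaDigit β x j) := by
  have hz : z ∈ Set.Ico (0:ℝ) 1 := ⟨le_trans hx.1 hxz, lt_of_le_of_lt hzy hy.2⟩
  have hb : (0:ℝ) < β := lt_trans one_pos hβ
  intro i
  induction i with
  | zero => intro _; refine ⟨by simp, by simp, by omega⟩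
  | succ i ih =>
    intro him
    obtain ⟨hyi, hzi, hdig⟩ := ih (by omega)
    have hbi : (0:ℝ) < β^i := by positivity
    have hxa : (betaT β)^[i] x ≤ (betaT β)^[i] z := by nlinarith
    have hza : (betaT β)^[i] z ≤ (betaT β)^[i] y := by nlinarith
    have hfxy : ⌊β * (betaT β)^[i] x⌋ = ⌊β * (betaT β)^[i] y⌋ :=
      floor_eq_of_digit_eq hβ hx hy (h i (by omega))
    have hfxz : ⌊β * (betaT β)^[i] x⌋ = ⌊β * (betaT β)^[i] z⌋ := by
      have l1 : ⌊β * (betaT β)^[i] x⌋ ≤ ⌊β * (betaT β)^[i] z⌋ :=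
        Int.floor_le_floor (by nlinarith)
      have l2 : ⌊β * (betaT β)^[i] z⌋ ≤ ⌊β * (betaT β)^[i] y⌋ :=
        Int.floor_le_floor (by nlinarith)
      omega
    have hdzi : betaDigit β z i = betaDigit β x i :=
      digit_eq_of_floor_eq hβ hz hx hfxz.symm
    have hdyi : betaDigit β y i = betaDigit β x i :=
      digit_eq_of_floor_eq hβ hy hx hfxy.symm
    refine ⟨?_, ?_, ?_⟩
    · rw [step hβ hy i, hdyi, hyi, step hβ hx i]; ring
    · rw [step hβ hz i, hdzi, hzi, step hβ hx i]; ring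
    · intro j hj
      rcases Nat.lt_succ_iff_lt_or_eq.mp hj with hj' | rfl
      · exact hdig j hj'
      · exact hdzi

lemma zeros_tailA (hβ : 1 < β) {x : ℝ} (hx : x ∈ Set.Ico (0:ℝ) 1) {n p : ℕ}
    (h : (betaT β)^[n] x * β^p < 1) :
    ∀ j ≤ p, (betaT β)^[n+j] x = β^j * (betaT β)^[n] x := by
  have hb : (0:ℝ) < β := lt_trans one_pos hβ
  have htn : (0:ℝ) ≤ (betaT β)^[n] x := (iter_mem hx n).1
  have key : ∀ j, j ≤ p → β^j * (betaT β)^[n] x < 1 := by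
    intro j hj
    calc β^j * (betaT β)^[n] x ≤ β^p * (betaT β)^[n] x := by
          apply mul_le_mul_of_nonneg_right (pow_le_pow_right₀ (le_of_lt hβ) hj) htn
      _ < 1 := by linarith [mul_comm ((betaT β)^[n] x) (β^p)]
  intro j
  induction j with
  | zero => intro _; simp
  | succ j ih =>
    intro hj
    have hjp : j ≤ p := by omega
    have hih := ih hjp
    have hdig : betaDigit β x (n+j) = 0 := by
      unfold betaDigit
      rw [hih]
      have : ⌊β * (β^j * (betaT β)^[n] x)⌋ = 0 := by
        rw [Int.floor_eq_zero_iff]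
        constructor
        · positivity
        · have := key (j+1) hj
          calc β * (β^j * (betaT β)^[n] x) = β^(j+1) * (betaT β)^[n] x := by ring
            _ < 1 := this
      rw [this]; rfl
    have := step hβ hx (n+j)
    rw [hdig] at this
    rw [show n + (j+1) = (n+j)+1 by omega, this, hih]
    push_cast
    ring

lemma zeros_tailB (hβ : 1 < β) {x : ℝ} (hx : x ∈ Set.Ico (0:ℝ) 1) {n p : ℕ}
    (h : (betaT β)^[n] x * β^p < 1) :
    ∀ j < p, betaDigit β x (n+j) = 0 := by
  have hb : (0:ℝ) < β := lt_trans one_pos hβ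
  have htn : (0:ℝ) ≤ (betaT β)^[n] x := (iter_mem hx n).1
  intro j hj
  have hA := zeros_tailA hβ hx h j (by omega)
  unfold betaDigit
  rw [hA]
  have : ⌊β * (β^j * (betaT β)^[n] x)⌋ = 0 := by
    rw [Int.floor_eq_zero_iff]
    refine ⟨by positivity, ?_⟩
    have h1 : β^(j+1) * (betaT β)^[n] x ≤ β^p * (betaT β)^[n] x :=
      mul_le_mul_of_nonneg_right (pow_le_pow_right₀ (le_of_lt hβ) (by omega)) htn
    calc β * (β^j * (betaT β)^[n] x) = β^(j+1) * (betaT β)^[n] x := by ring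
      _ ≤ β^p * (betaT β)^[n] x := h1
      _ < 1 := by linarith [mul_comm ((betaT β)^[n] x) (β^p)]
  rw [this]; rfl

/-- properties of the value `v` of the digit word of `x₀`. -/
lemma value_props (hβ : 1 < β) {x₀ : ℝ} (hx : x₀ ∈ Set.Ico (0:ℝ) 1) (n : ℕ) {v : ℝ}
    (hv : v = ∑ i ∈ Finset.range n, (betaDigit β x₀ i : ℝ) * (β^(i+1))⁻¹) :
    v ∈ Set.Ico (0:ℝ) 1 ∧
    (∀ i ≤ n, (betaT β)^[i] v = (betaT β)^[i] x₀ - β^i * ((β^n)⁻¹ * (betaT β)^[n] x₀)) ∧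
    (∀ i < n, betaDigit β v i = betaDigit β x₀ i) := by
  have hb : (0:ℝ) < β := lt_trans one_pos hβ
  set c : ℕ → ℝ := fun i => (betaT β)^[i] x₀ - β^i * ((β^n)⁻¹ * (betaT β)^[n] x₀) with hc
  -- c i ∈ [0, 1) for i ≤ n
  have hcmem : ∀ i ≤ n, 0 ≤ c i ∧ c i < 1 := by
    intro i hi
    have h1 : (betaT β)^[n] x₀ ≤ β^(n-i) * (betaT β)^[i] x₀ := by
      have := iter_le hβ (iter_mem (β := β) hx i).1 (n - i)
      rwa [← Function.iterate_add_apply, Nat.sub_add_cancel hi] at this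
    have hne : β^i * (β^n)⁻¹ = (β^(n-i))⁻¹ := by
      rw [show n = (n - i) + i by omega, pow_add, mul_inv]
      field_simp
      ring
      rw [Nat.add_sub_cancel]
    have hTn : (0:ℝ) ≤ (betaT β)^[n] x₀ := (iter_mem (β := β) hx n).1
    have hii : (0:ℝ) < β^(n-i) := by positivity
    constructor
    · simp only [hc]
      rw [sub_nonneg, ← mul_assoc, hne, inv_mul_le_iff₀ hii]
      exact h1
    · have : β^i * ((β^n)⁻¹ * (betaT β)^[n] x₀) ≥ 0 := by positivity
      have h2 := (iter_mem (β := β) hx i).2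
      simp only [hc]
      linarith
  -- v = c 0
  have hv0 : v = c 0 := by
    have := expansion hβ hx n
    simp only [hc]
    rw [hv]
    have h3 : x₀ - v = (β^n)⁻¹ * (betaT β)^[n] x₀ := by
      rw [this, hv]
      field_simp
    simp only [pow_zero, Function.iterate_zero_apply, one_mul]
    rw [hv] at h3
    linarith
  have hvmem : v ∈ Set.Ico (0:ℝ) 1 := by
    rw [hv0]; exact ⟨(hcmem 0 (by omega)).1, (hcmem 0 (by omega)).2⟩
  -- main induction
  have main : ∀ i ≤ n, (betaT β)^[i] v = c i ∧ ∀ j < i, betaDigit β v j = betaDigit β x₀ j := by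
    intro i
    induction i with
    | zero => intro _; exact ⟨by simpa using hv0, by omega⟩
    | succ i ih =>
      intro hi
      obtain ⟨hTi, hdig⟩ := ih (by omega)
      -- β * c i = digit x₀ i + c (i+1)
      have hkey : β * c i = (betaDigit β x₀ i : ℝ) + c (i+1) := by
        have hs := step hβ hx i
        simp only [hc]
        rw [show (betaT β)^[i+1] x₀ = β * (betaT β)^[i] x₀ - (betaDigit β x₀ i : ℝ) from hs]
        ring
      have hc1 := hcmem (i+1) hi
      have hfloor : ⌊β * (betaT β)^[i] v⌋ = (betaDigit β x₀ i : ℤ) := by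
        rw [hTi, hkey]
        rw [Int.floor_eq_iff]
        push_cast
        constructor <;> [linarith [hc1.1]; linarith [hc1.2]]
      have hdigi : betaDigit β v i = betaDigit β x₀ i := by
        show (⌊β * (betaT β)^[i] v⌋).toNat = _
        rw [hfloor, Int.toNat_natCast]
      have hstep : (betaT β)^[i+1] v = β * (betaT β)^[i] v - (betaDigit β v i : ℝ) :=
        step hβ hvmem i
      refine ⟨?_, ?_⟩
      · rw [hstep, hdigi, hTi, hkey]; ring
      · intro j hj
        rcases Nat.lt_succ_iff_lt_or_eq.mp hj with hj' | rfl
        · exact hdig j hj'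
        · exact hdigi
  refine ⟨hvmem, fun i hi => (main i hi).1, fun i hi => (main n le_rfl).2 i hi⟩

end Stmt8Aux

open Stmt8Aux in
/-- `I_{n+p}(ε_1,…,ε_n,0^p)` is full iff `|I_n(ε_1,…,ε_n)| ≥ β^{-(n+p)}`. -/
theorem stmt8 (β : ℝ) (hβ : 1 < β) {n : ℕ} (hn : 1 ≤ n) (p : ℕ) (w : Fin n → ℕ)
    (hw : w ∈ admissibleWords β n) :
    volume (cylinder β (Fin.append w (fun _ : Fin p => 0))) =
        ENNReal.ofReal ((β ^ (n + p))⁻¹) ↔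
      ENNReal.ofReal ((β ^ (n + p))⁻¹) ≤ volume (cylinder β w) := by
  obtain ⟨x₀, hx₀, hx₀d⟩ := hw
  have hb : (0:ℝ) < β := lt_trans one_pos hβ
  set W : Fin (n+p) → ℕ := Fin.append w (fun _ : Fin p => 0) with hW
  set v : ℝ := ∑ i ∈ Finset.range n, (betaDigit β x₀ i : ℝ) * (β^(i+1))⁻¹ with hv
  obtain ⟨hvmem, hvT, hvdig⟩ := value_props hβ hx₀ n hv
  set r : ℝ := (β^(n+p))⁻¹ with hr
  have hrpos : 0 < r := by positivity
  have hx₀n : ∀ i (h : i < n), betaDigit β x₀ i = w ⟨i, h⟩ := fun i h => hx₀d ⟨i, h⟩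
  have hvdign : ∀ i (h : i < n), betaDigit β v i = w ⟨i, h⟩ := fun i h =>
    (hvdig i h).trans (hx₀n i h)
  -- W evaluated
  have hWlt : ∀ (i : ℕ) (h : i < n), W (⟨i, by omega⟩ : Fin (n+p)) = w ⟨i, h⟩ := by
    intro i h
    have : (⟨i, by omega⟩ : Fin (n+p)) = Fin.castAdd p ⟨i, h⟩ := rfl
    rw [this, hW, Fin.append_left]
  have hWge : ∀ (j : ℕ) (h : j < p), W (⟨n + j, by omega⟩ : Fin (n+p)) = 0 := by
    intro j h
    have : (⟨n + j, by omega⟩ : Fin (n+p)) = Fin.natAdd n ⟨j, h⟩ := rfl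
    rw [this, hW, Fin.append_right]
  -- location of points of the cylinder of w
  have memC_loc : ∀ x ∈ cylinder β w, v ≤ x ∧ (betaT β)^[n] x = β^n * (x - v) := by
    intro x hx
    have hsum : ∑ i ∈ Finset.range n, (betaDigit β x i : ℝ) * (β^(i+1))⁻¹ = v := by
      rw [hv]
      refine Finset.sum_congr rfl fun i hi => ?_
      have hi' : i < n := Finset.mem_range.mp hi
      rw [hx.2 ⟨i, hi'⟩, hx₀n i hi']
    have he := expansion hβ hx.1 n
    rw [hsum] at he
    refine ⟨?_, he⟩
    have h0 := (iter_mem (β := β) hx.1 n).1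
    rw [he] at h0
    nlinarith [pow_pos hb n]
  -- points of the cylinder of W lie in [v, v + r)
  have memC'_loc : ∀ x ∈ cylinder β W, x ∈ Set.Ico v (v + r) := by
    intro x hx
    have hd1 : ∀ i (h : i < n), betaDigit β x i = w ⟨i, h⟩ := by
      intro i h
      have := hx.2 (⟨i, by omega⟩ : Fin (n+p))
      rwa [hWlt i h] at this
    have hd2 : ∀ j (h : j < p), betaDigit β x (n + j) = 0 := by
      intro j h
      have := hx.2 (⟨n + j, by omega⟩ : Fin (n+p))
      rwa [hWge j h] at this
    have hsum : ∑ i ∈ Finset.range (n+p), (betaDigit β x i : ℝ) * (β^(i+1))⁻¹ = v := by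
      rw [← Finset.sum_subset (Finset.range_subset_range.2 (Nat.le_add_right n p))]
      · rw [hv]
        refine Finset.sum_congr rfl fun i hi => ?_
        have hi' : i < n := Finset.mem_range.mp hi
        rw [hd1 i hi', hx₀n i hi']
      · intro i hi hni
        have h1 : i < n + p := Finset.mem_range.mp hi
        have h2 : n ≤ i := by simpa using Finset.mem_range.not.mp hni |> fun h => by omega
        have := hd2 (i - n) (by omega)
        rw [show n + (i - n) = i by omega] at this
        rw [this]
        simp
    have he := expansion hβ hx.1 (n+p)
    rw [hsum] at he
    have h0 := (iter_mem (β := β) hx.1 (n+p)).1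
    have h1 := (iter_mem (β := β) hx.1 (n+p)).2
    rw [he] at h0 h1
    have hp : (0:ℝ) < β^(n+p) := pow_pos hb (n+p)
    have hinv : β^(n+p) * r = 1 := by
      rw [hr]; field_simp
    constructor
    · nlinarith
    · rw [← hinv] at h1
      have h2 : x - v < r := lt_of_mul_lt_mul_left h1 hp.le
      linarith
  have hsub : cylinder β W ⊆ cylinder β w := by
    intro x hx
    refine ⟨hx.1, fun i => ?_⟩
    have := hx.2 (⟨(i : ℕ), by omega⟩ : Fin (n+p))
    rw [hWlt (i : ℕ) i.isLt] at this
    simpa using this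
  constructor
  · intro h
    rw [← h]
    exact measure_mono hsub
  · intro h
    have hC'eq : cylinder β W = Set.Ico v (v + r) := by
      apply Set.Subset.antisymm
      · intro x hx; exact memC'_loc x hx
      · intro z hz
        have hey : ∃ y ∈ cylinder β w, z ≤ y := by
          by_contra hcon
          push_neg at hcon
          have hsub2 : cylinder β w ⊆ Set.Ico v z := fun y hy =>
            ⟨(memC_loc y hy).1, hcon y hy⟩
          have hm : volume (cylinder β w) ≤ volume (Set.Ico v z) := measure_mono hsub2
          rw [Real.volume_Ico] at hm
          have hlt : ENNReal.ofReal (z - v) < ENNReal.ofReal r :=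
            (ENNReal.ofReal_lt_ofReal_iff hrpos).2 (by linarith [hz.2])
          exact absurd (le_trans h hm) (not_le.2 hlt)
        obtain ⟨y, hy, hzy⟩ := hey
        have hvz : v ≤ z := hz.1
        have hdig_vy : ∀ j < n, betaDigit β v j = betaDigit β y j := fun j hj =>
          (hvdign j hj).trans (hy.2 ⟨j, hj⟩).symm
        have hs := sandwich hβ hvmem hy.1 hvz hzy hdig_vy n le_rfl
        have hzmem : z ∈ Set.Ico (0:ℝ) 1 :=
          ⟨le_trans hvmem.1 hvz, lt_of_le_of_lt hzy hy.1.2⟩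
        have hzdig : ∀ j (hj : j < n), betaDigit β z j = w ⟨j, hj⟩ := fun j hj =>
          (hs.2.2 j hj).trans (hvdign j hj)
        have hzC : z ∈ cylinder β w := ⟨hzmem, fun i => by simpa using hzdig (i : ℕ) i.isLt⟩
        have hTz := (memC_loc z hzC).2
        have hsmall : (betaT β)^[n] z * β^p < 1 := by
          rw [hTz]
          have h2 : z - v < r := by linarith [hz.2]
          have hp1 : (0:ℝ) < β^p := pow_pos hb p
          have hp2 : (0:ℝ) < β^n := pow_pos hb n
          have : β^n * (z - v) * β^p = β^(n+p) * (z - v) := by rw [pow_add]; ring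
          rw [this]
          have hβnp : (0:ℝ) < β^(n+p) := pow_pos hb (n+p)
          calc β^(n+p) * (z - v) < β^(n+p) * r := by
                apply mul_lt_mul_of_pos_left h2 hβnp
            _ = 1 := by rw [hr]; field_simp
        have hzero := zeros_tailB hβ hzmem hsmall
        refine ⟨hzmem, fun i => ?_⟩
        refine Fin.addCases (motive := fun i => betaDigit β z (i : ℕ) = W i) ?_ ?_ i
        · intro j
          have : ((Fin.castAdd p j : Fin (n+p)) : ℕ) = (j : ℕ) := rfl
          rw [this, hW, Fin.append_left]
          exact hzdig (j : ℕ) j.isLt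
        · intro j
          have : ((Fin.natAdd n j : Fin (n+p)) : ℕ) = n + (j : ℕ) := rfl
          rw [this, hW, Fin.append_right]
          exact hzero (j : ℕ) j.isLt
    rw [hC'eq, Real.volume_Ico]
    congr 1
    ring
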